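/- Let K ⊆ L be a field extension and let A, B ⊆ L be subsets such that every element of A is algebraic over the intermediate field K(B) = IntermediateField.adjoin K B and every element of B is algebraic over K(A) = IntermediateField.adjoin K A. Then the transcendence degree of K(A) over K equals the transcendence degree of K(B) over K. (Lemma 6.1.) -/

import Mathlib

/-- The transcendence degree of an algebra `L` over `K`: the supremum of the
cardinalities of algebraically independent subsets of `L`. -/
noncomputable def trdeg (K L : Type*) [CommRing K] [CommRing L] [Algebra K L] : Cardinal :=
  ⨆ s : {s : Set L // AlgebraicIndependent K ((↑) : s → L)}, Cardinal.mk s.1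

namespace TrdegProof

open IntermediateField Set Cardinal Polynomial

variable {K L : Type*} [Field K] [Field L] [Algebra K L]

/-- Transfer of algebraicity of an element of `L` along a compatible injective ring hom
between two rings mapping to `L`. -/
theorem isAlgebraic_transfer {R S : Type*} [CommRing R] [CommRing S] [Algebra R L] [Algebra S L]
    (f : R →+* S) (hf : Function.Injective f)
    (hcomp : ∀ r, algebraMap S L (f r) = algebraMap R L r) {x : L}
    (h : IsAlgebraic R x) : IsAlgebraic S x := by
  have := h.ringHom_of_comp_eq f (RingHom.id L) hf (by ext r; simp [hcomp r])
  simpa using this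

/-- Inclusion ring hom between intermediate fields over possibly different base fields. -/
def incIF {K₁ K₂ : Type*} [Field K₁] [Field K₂] [Algebra K₁ L] [Algebra K₂ L]
    (M₁ : IntermediateField K₁ L) (M₂ : IntermediateField K₂ L)
    (h : (M₁ : Set L) ⊆ (M₂ : Set L)) : M₁ →+* M₂ where
  toFun a := ⟨a.1, h a.2⟩
  map_one' := rfl
  map_mul' _ _ := rfl
  map_zero' := rfl
  map_add' _ _ := rfl

theorem isAlgebraic_mono {K₁ K₂ : Type*} [Field K₁] [Field K₂] [Algebra K₁ L] [Algebra K₂ L]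
    {M₁ : IntermediateField K₁ L} {M₂ : IntermediateField K₂ L}
    (h : (M₁ : Set L) ⊆ (M₂ : Set L)) {x : L}
    (hx : IsAlgebraic M₁ x) : IsAlgebraic M₂ x := by
  refine isAlgebraic_transfer (incIF M₁ M₂ h) ?_ (fun r => ?_) hx
  · intro a b hab
    have h1 : (incIF M₁ M₂ h a).1 = (incIF M₁ M₂ h b).1 := congrArg Subtype.val hab
    exact Subtype.ext h1
  · show ((incIF M₁ M₂ h r : M₂) : L) = (r : L)
    rfl

set_option maxHeartbeats 1000000 in
set_option synthInstance.maxHeartbeats 400000 in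
/-- An element algebraic over the intermediate field `K(S)` is already algebraic over the
subalgebra `K[S]` (clearing denominators), and conversely. -/
theorem isAlgebraic_algAdjoin_iff {F : Type*} [Field F] [Algebra F L] (S : Set L) (x : L) :
    IsAlgebraic (Algebra.adjoin F S) x ↔ IsAlgebraic (IntermediateField.adjoin F S) x := by
  constructor
  · intro h
    have h2 : IsAlgebraic ((IntermediateField.adjoin F S).toSubalgebra) x :=
      h.tower_top_of_subalgebra_le (IntermediateField.algebra_adjoin_le_adjoin F S)
    exact h2
  · intro h
    set A := Algebra.adjoin F S with hA
    have hg : Function.Injective (A.val) := Subtype.val_injective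
    let f : FractionRing A →ₐ[F] L := IsFractionRing.liftAlgHom hg
    have hrange : f.fieldRange = IntermediateField.adjoin F S :=
      IsFractionRing.liftAlgHom_fieldRange_eq_of_range_eq hg (Subalgebra.range_val A)
    letI : Algebra (FractionRing A) L := f.toRingHom.toAlgebra
    haveI : IsScalarTower A (FractionRing A) L := IsScalarTower.of_algebraMap_eq fun a => by
      change _ = f (algebraMap A (FractionRing A) a)
      rw [show (f : FractionRing A → L) (algebraMap A (FractionRing A) a)
            = IsFractionRing.lift hg (algebraMap A (FractionRing A) a) from rfl,
        IsFractionRing.lift_algebraMap]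
      rfl
    rw [IsFractionRing.isAlgebraic_iff A (FractionRing A) L]
    -- transfer along the iso `adjoin F S ≃ FractionRing A`
    have hfInj : Function.Injective f := f.toRingHom.injective
    let e1 : (IntermediateField.adjoin F S) ≃ₐ[F] f.fieldRange :=
      IntermediateField.equivOfEq hrange.symm
    let e2 : f.fieldRange ≃ₐ[F] FractionRing A := (AlgEquiv.ofInjectiveField f).symm
    refine isAlgebraic_transfer ((e2.toRingEquiv.toRingHom.comp e1.toRingEquiv.toRingHom))
      (e2.injective.comp e1.injective) (fun r => ?_) h
    show algebraMap (FractionRing A) L (e2 (e1 r)) = algebraMap _ L r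
    have : ∀ y : f.fieldRange, algebraMap (FractionRing A) L (e2 y) = (y : L) := by
      intro y
      change f (e2 y) = (y : L)
      have := (AlgEquiv.ofInjectiveField f).apply_symm_apply y
      calc f (e2 y) = ((AlgEquiv.ofInjectiveField f) (e2 y) : L) := rfl
        _ = (y : L) := by rw [show (AlgEquiv.ofInjectiveField f) (e2 y) = y from this]
    rw [this (e1 r)]
    rfl

/-- Algebraic closure operator (as a set) relative to the base field `K`. -/
def acl (K : Type*) [Field K] {L : Type*} [Field L] [Algebra K L] (S : Set L) : Set L :=
  {x | IsAlgebraic (IntermediateField.adjoin K S) x}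

theorem mem_acl {S : Set L} {x : L} :
    x ∈ acl K S ↔ IsAlgebraic (IntermediateField.adjoin K S) x := Iff.rfl

theorem mem_acl_of_mem_adjoin {S : Set L} {x : L}
    (h : x ∈ IntermediateField.adjoin K S) : x ∈ acl K S := by
  have := isAlgebraic_algebraMap (R := IntermediateField.adjoin K S) (A := L) ⟨x, h⟩
  simpa [mem_acl] using this

theorem subset_acl (S : Set L) : S ⊆ acl K S := fun _ hx =>
  mem_acl_of_mem_adjoin (IntermediateField.subset_adjoin K S hx)

theorem acl_mono {S T : Set L} (h : S ⊆ T) : acl K S ⊆ acl K T := fun _ hx =>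
  isAlgebraic_mono (SetLike.coe_subset_coe.2 (IntermediateField.adjoin.mono K S T h)) hx

theorem acl_trans {S T : Set L} (h : T ⊆ acl K S) : acl K T ⊆ acl K S := by
  intro z hz
  set M := IntermediateField.adjoin K S with hM
  set N := IntermediateField.adjoin M T with hN
  haveI : Algebra.IsAlgebraic M N :=
    IntermediateField.isAlgebraic_adjoin (fun t ht => (h ht).isIntegral)
  have hcar : ((N.restrictScalars K : IntermediateField K L) : Set L)
      = (IntermediateField.adjoin K (S ∪ T) : Set L) := by
    rw [hN, hM, IntermediateField.adjoin_adjoin_left]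
  have hsub : ((IntermediateField.adjoin K T : IntermediateField K L) : Set L) ⊆ (N : Set L) := by
    have h1 : ((IntermediateField.adjoin K T : IntermediateField K L) : Set L)
        ⊆ (IntermediateField.adjoin K (S ∪ T) : Set L) :=
      SetLike.coe_subset_coe.2 (IntermediateField.adjoin.mono K _ _ subset_union_right)
    have h2 : ((N.restrictScalars K : IntermediateField K L) : Set L) = (N : Set L) := rfl
    rw [← h2, hcar]
    exact h1
  have hz' : IsAlgebraic N z := isAlgebraic_mono hsub hz
  haveI : Algebra.IsIntegral M N := Algebra.isAlgebraic_iff_isIntegral.1 ‹_›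
  exact (isIntegral_trans (R := M) (A := N) z hz'.isIntegral).isAlgebraic


theorem insert_indep {u : Set L} {b : L}
    (hu : AlgebraicIndependent K ((↑) : u → L)) (hb : Transcendental (Algebra.adjoin K u) b)
    (hbu : b ∉ u) : AlgebraicIndependent K ((↑) : ↥(insert b u) → L) := by
  classical
  convert ((Subtype.range_coe ▸ hu.option_iff_transcendental b).2 hb).comp _
    (Set.subtypeInsertEquivOption hbu).injective
  ext x
  by_cases h : ↑x = b <;> simp [h, Set.subtypeInsertEquivOption]

theorem transcendental_diff {s : Set L} {x : L}
    (hs : AlgebraicIndependent K ((↑) : s → L)) (hx : x ∈ s) :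
    Transcendental (Algebra.adjoin K (s \ {x})) x := by
  classical
  have hrest : AlgebraicIndependent K ((↑) : (s \ {x} : Set L) → L) := hs.mono diff_subset
  have hins : AlgebraicIndependent K ((↑) : ↥(insert x (s \ {x})) → L) := by
    rwa [Set.insert_diff_singleton, Set.insert_eq_of_mem hx]
  have hxnot : x ∉ s \ {x} := fun h => h.2 rfl
  have h2 := hins.comp (Set.subtypeInsertEquivOption hxnot).symm (Equiv.injective _)
  have heq : ((↑) : ↥(insert x (s \ {x})) → L) ∘ (Set.subtypeInsertEquivOption hxnot).symm
      = fun o : Option (s \ {x} : Set L) => o.elim x (fun z => (z : L)) := by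
    ext o; cases o <;> simp [Set.subtypeInsertEquivOption]
  rw [heq] at h2
  have h3 := (hrest.option_iff_transcendental x).1 h2
  rwa [Subtype.range_coe] at h3

theorem exchange {S : Set L} {x y : L}
    (hxS : ¬ IsAlgebraic (IntermediateField.adjoin K S) x)
    (hx : IsAlgebraic (IntermediateField.adjoin K (insert y S)) x) :
    IsAlgebraic (IntermediateField.adjoin K (insert x S)) y := by
  by_contra hy
  set M := IntermediateField.adjoin K S with hM
  have hcar : ∀ z : L, ((IntermediateField.adjoin M {z} : IntermediateField M L) : Set L)
      = (IntermediateField.adjoin K (insert z S) : Set L) := by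
    intro z
    have h1 : (((IntermediateField.adjoin M {z}).restrictScalars K :
        IntermediateField K L) : Set L) = (IntermediateField.adjoin K (S ∪ {z}) : Set L) := by
      rw [IntermediateField.adjoin_adjoin_left]
    rw [Set.union_singleton] at h1
    exact h1
  have h1 : IsAlgebraic (IntermediateField.adjoin M ({y} : Set L)) x :=
    isAlgebraic_mono (hcar y).ge hx
  have h2 : ¬ IsAlgebraic (IntermediateField.adjoin M ({x} : Set L)) y := fun hc =>
    hy (isAlgebraic_mono (hcar x).le hc)
  have hxM : Transcendental M x := hxS
  have sInd : AlgebraicIndependent M (fun _ : Unit => x) :=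
    algebraicIndependent_unique_type_iff.2 hxM
  have hyT : Transcendental (Algebra.adjoin M (Set.range (fun _ : Unit => x))) y := by
    rw [Set.range_const]
    exact fun hc => h2 ((isAlgebraic_algAdjoin_iff (L := L) ({x} : Set L) y).1 hc)
  have pairInd := (sInd.option_iff_transcendental y).2 hyT
  let σ : Option Unit → Option Unit := fun o => o.elim (some ()) (fun _ => none)
  have hσ : Function.Injective σ := by
    intro a b hab
    cases a <;> cases b <;> simp_all [σ]
  have swapped := pairInd.comp σ hσ
  have hfun : ((fun o : Option Unit => o.elim y fun _ : Unit => x) ∘ σ)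
      = fun o : Option Unit => o.elim x fun _ : Unit => y := by
    ext o; cases o <;> rfl
  rw [hfun] at swapped
  have yInd : AlgebraicIndependent M (fun _ : Unit => y) :=
    swapped.comp (fun _ : Unit => some ()) (fun _ _ _ => rfl)
  have hxT : Transcendental (Algebra.adjoin M (Set.range (fun _ : Unit => y))) x :=
    (yInd.option_iff_transcendental x).1 swapped
  rw [Set.range_const] at hxT
  exact hxT ((isAlgebraic_algAdjoin_iff (L := L) ({y} : Set L) x).2 h1)

theorem exists_finset_acl {t : Set L} {x : L} (h : x ∈ acl K t) :
    ∃ F : Finset L, (↑F : Set L) ⊆ t ∧ x ∈ acl K (↑F : Set L) := by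
  classical
  obtain ⟨p, hp0, hpx⟩ := h
  set P := p.map (algebraMap (IntermediateField.adjoin K t) L) with hP
  have hPcoeff : ∀ n, P.coeff n ∈ IntermediateField.adjoin K t := by
    intro n
    rw [hP, Polynomial.coeff_map]
    exact (p.coeff n).2
  choose G hGsub hGmem using fun n => IntermediateField.exists_finset_of_mem_adjoin (hPcoeff n)
  refine ⟨P.support.biUnion G, ?_, ?_⟩
  · intro z hz
    rw [Finset.coe_biUnion] at hz
    simp only [Set.mem_iUnion] at hz
    obtain ⟨n, _, hn⟩ := hz
    exact hGsub n hn
  set F := P.support.biUnion G with hF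
  set N := IntermediateField.adjoin K (↑F : Set L) with hN
  have hcoeffs : (↑P.coeffs : Set L) ⊆ (N.toSubring : Set L) := by
    intro c hc
    rw [Finset.mem_coe, Polynomial.mem_coeffs_iff] at hc
    obtain ⟨n, hn, rfl⟩ := hc
    have : (↑(G n) : Set L) ⊆ (↑F : Set L) := by
      intro z hz
      rw [hF, Finset.coe_biUnion]
      simp only [Set.mem_iUnion]
      exact ⟨n, hn, hz⟩
    exact (IntermediateField.adjoin.mono K _ _ this) (hGmem n)
  set q := P.toSubring N.toSubring hcoeffs with hq
  have hmapq : q.map N.toSubring.subtype = P := by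
    ext n
    rw [Polynomial.coeff_map]
    exact Polynomial.coeff_toSubring' P N.toSubring hcoeffs
  have hP0 : P ≠ 0 := by
    rw [hP, Ne, Polynomial.map_eq_zero_iff (algebraMap (IntermediateField.adjoin K t) L).injective]
    exact hp0
  have hq0 : q ≠ 0 := by
    intro h0
    rw [h0, Polynomial.map_zero] at hmapq
    exact hP0 hmapq.symm
  have halg : IsAlgebraic N.toSubring x := by
    refine ⟨q, hq0, ?_⟩
    have h1 : Polynomial.aeval x q = Polynomial.eval x (q.map N.toSubring.subtype) := by
      rw [Polynomial.aeval_def, Polynomial.eval_map]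
      rfl
    rw [h1, hmapq, hP, Polynomial.eval_map, ← Polynomial.aeval_def, hpx]
  refine isAlgebraic_transfer (R := N.toSubring) (S := N)
    ⟨⟨⟨fun a => ⟨a.1, a.2⟩, rfl⟩, fun _ _ => rfl⟩, rfl, fun _ _ => rfl⟩
    (fun a b hab => Subtype.ext (congrArg Subtype.val hab)) (fun _ => rfl) halg

theorem finset_card_le {s : Finset L} (hs : AlgebraicIndependent K ((↑) : (↑s : Set L) → L)) :
    ∀ F : Finset L, (↑s : Set L) ⊆ acl K (↑F : Set L) → s.card ≤ F.card := by
  classical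
  suffices H : ∀ (n : ℕ) (F : Finset L), (s \ F).card = n →
      (↑s : Set L) ⊆ acl K (↑F : Set L) → s.card ≤ F.card by
    intro F hF
    exact H _ F rfl hF
  intro n
  induction n with
  | zero =>
    intro F h0 hF
    have hsub : s ⊆ F := by
      rw [← Finset.sdiff_eq_empty_iff_subset]
      exact Finset.card_eq_zero.1 h0
    exact Finset.card_le_card hsub
  | succ n ih =>
    intro F hcard hsF
    have hne : (s \ F).Nonempty := by
      rw [← Finset.card_pos, hcard]
      omega
    obtain ⟨x, hx⟩ := hne
    have hxs : x ∈ s := (Finset.mem_sdiff.1 hx).1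
    have hxF : x ∉ F := (Finset.mem_sdiff.1 hx).2
    set base := s ∩ F with hbase
    set 𝒢 := (F \ s).powerset.filter (fun G => x ∈ acl K (↑(G ∪ base) : Set L)) with h𝒢
    have h𝒢ne : (F \ s) ∈ 𝒢 := by
      rw [h𝒢, Finset.mem_filter, Finset.mem_powerset]
      refine ⟨le_refl _, ?_⟩
      rw [hbase, Finset.inter_comm, Finset.sdiff_union_inter]
      exact hsF hxs
    obtain ⟨G, hG𝒢, hGmin⟩ := Finset.exists_min_image 𝒢 Finset.card ⟨_, h𝒢ne⟩
    have hGsub : G ⊆ F \ s := Finset.mem_powerset.1 (Finset.mem_filter.1 hG𝒢).1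
    have hGx : x ∈ acl K (↑(G ∪ base) : Set L) := (Finset.mem_filter.1 hG𝒢).2
    have hGne : G.Nonempty := by
      rcases G.eq_empty_or_nonempty with rfl | h
      · exfalso
        have hxb : x ∈ acl K (↑base : Set L) := by simpa using hGx
        have hbs : (↑base : Set L) ⊆ (↑s : Set L) \ {x} := by
          intro z hz
          rw [hbase, Finset.coe_inter] at hz
          exact ⟨hz.1, fun hzx => hxF (hzx ▸ hz.2)⟩
        have hxcl : x ∈ acl K ((↑s : Set L) \ {x}) := acl_mono hbs hxb
        exact transcendental_diff hs hxs
          ((isAlgebraic_algAdjoin_iff ((↑s : Set L) \ {x}) x).2 hxcl)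
      · exact h
    obtain ⟨y, hyG⟩ := hGne
    have hyFs : y ∈ F \ s := hGsub hyG
    have hyF : y ∈ F := (Finset.mem_sdiff.1 hyFs).1
    have hys : y ∉ s := (Finset.mem_sdiff.1 hyFs).2
    have hmin : x ∉ acl K (↑(G.erase y ∪ base) : Set L) := by
      intro hcl
      have hmem : (G.erase y) ∈ 𝒢 := by
        rw [h𝒢, Finset.mem_filter, Finset.mem_powerset]
        exact ⟨(Finset.erase_subset y G).trans hGsub, hcl⟩
      have h1 := hGmin _ hmem
      have h2 : (G.erase y).card < G.card := Finset.card_erase_lt_of_mem hyG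
      omega
    have hsets : (↑(G ∪ base) : Set L) = insert y (↑(G.erase y ∪ base) : Set L) := by
      rw [Finset.coe_union, Finset.coe_union]
      rw [show (↑G : Set L) = insert y (↑(G.erase y) : Set L) by
        rw [← Finset.coe_insert, Finset.insert_erase hyG]]
      rw [Set.insert_union]
    have hy' : y ∈ acl K (insert x (↑(G.erase y ∪ base) : Set L)) := by
      refine exchange hmin ?_
      rw [← hsets]
      exact hGx
    set F' := insert x (F.erase y) with hF'
    have hxFy : x ∉ F.erase y := fun hc => hxF (Finset.mem_of_mem_erase hc)
    have hF'card : F'.card = F.card := by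
      rw [hF', Finset.card_insert_of_notMem hxFy, Finset.card_erase_of_mem hyF]
      have : 0 < F.card := Finset.card_pos.2 ⟨y, hyF⟩
      omega
    have hFsub : (↑F : Set L) ⊆ acl K (↑F' : Set L) := by
      intro z hz
      by_cases hzy : z = y
      · subst hzy
        refine acl_mono ?_ hy'
        intro w hw
        rcases hw with rfl | hw
        · rw [hF', Finset.coe_insert]
          exact Set.mem_insert _ _
        · rw [Finset.coe_union] at hw
          rw [hF', Finset.coe_insert]
          rcases hw with hw | hw
          · refine Set.mem_insert_of_mem _ ?_
            rw [Finset.coe_erase] at hw ⊢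
            exact ⟨(Finset.mem_sdiff.1 (hGsub hw.1)).1, hw.2⟩
          · refine Set.mem_insert_of_mem _ ?_
            rw [Finset.coe_erase]
            rw [hbase, Finset.coe_inter] at hw
            exact ⟨hw.2, fun hzy => hys (hzy ▸ hw.1)⟩
      · refine subset_acl _ ?_
        rw [hF', Finset.coe_insert]
        refine Set.mem_insert_of_mem _ ?_
        rw [Finset.coe_erase]
        exact ⟨hz, hzy⟩
    have hsF' : (↑s : Set L) ⊆ acl K (↑F' : Set L) := fun z hz =>
      acl_trans hFsub (hsF hz)
    have hmeas : (s \ F').card = n := by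
      have hset : s \ F' = (s \ F).erase x := by
        ext z
        simp only [hF', Finset.mem_sdiff, Finset.mem_erase, Finset.mem_insert, Finset.mem_erase]
        constructor
        · rintro ⟨hzs, hznot⟩
          push_neg at hznot
          exact ⟨hznot.1, hzs, fun hzF => (hznot.2 (fun hzy => hys (hzy ▸ hzs)) hzF).elim⟩
        · rintro ⟨hzx, hzs, hzF⟩
          refine ⟨hzs, ?_⟩
          push_neg
          exact ⟨hzx, fun _ hzF' => hzF hzF'⟩
      rw [hset, Finset.card_erase_of_mem hx, hcard]
      omega
    exact (ih F' hmeas hsF').trans_eq hF'card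

theorem set_finite_card_le {s : Set L} (hs : AlgebraicIndependent K ((↑) : s → L))
    (F : Finset L) (hsF : s ⊆ acl K (↑F : Set L)) :
    s.Finite ∧ Cardinal.mk s ≤ F.card := by
  classical
  have key : ∀ s' : Finset L, (↑s' : Set L) ⊆ s → s'.card ≤ F.card := fun s' hsub =>
    finset_card_le (hs.mono hsub) F (fun z hz => hsF (hsub hz))
  have hsfin : s.Finite := by
    by_contra hinf
    obtain ⟨s', hsub, hcard⟩ := Set.Infinite.exists_subset_card_eq hinf (F.card + 1)
    have := key s' hsub
    omega
  refine ⟨hsfin, ?_⟩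
  have h2 : Cardinal.mk (↑hsfin.toFinset : Set L) = (hsfin.toFinset.card : Cardinal) :=
    Cardinal.mk_coe_finset
  have h1 : s = (↑hsfin.toFinset : Set L) := hsfin.coe_toFinset.symm
  rw [h1, h2]
  exact_mod_cast key hsfin.toFinset (by rw [hsfin.coe_toFinset])

theorem mk_le_acl {s t : Set L} (hs : AlgebraicIndependent K ((↑) : s → L))
    (hst : s ⊆ acl K t) : Cardinal.mk s ≤ Cardinal.mk t := by
  classical
  rcases t.finite_or_infinite with ht | ht
  · obtain ⟨hsfin, hle⟩ := set_finite_card_le hs ht.toFinset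
      (by rwa [ht.coe_toFinset])
    have h2 : Cardinal.mk (↑ht.toFinset : Set L) = (ht.toFinset.card : Cardinal) :=
      Cardinal.mk_coe_finset
    have h1 : t = (↑ht.toFinset : Set L) := ht.coe_toFinset.symm
    rw [h1, h2]
    exact hle
  · haveI : Infinite ↥t := ht.to_subtype
    choose G hG1 hG2 using fun x : ↥s => exists_finset_acl (hst x.2)
    set ψ : ↥s → {F : Finset L // (↑F : Set L) ⊆ t} := fun x => ⟨G x, hG1 x⟩ with hψ
    have hfib : ∀ b : {F : Finset L // (↑F : Set L) ⊆ t}, Cardinal.mk (ψ ⁻¹' {b}) ≤ ℵ₀ := by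
      intro b
      set u : Set L := s ∩ acl K (↑b.1 : Set L) with hu
      have hufin : u.Finite :=
        (set_finite_card_le (hs.mono inter_subset_left) b.1 inter_subset_right).1
      haveI : Finite ↥u := hufin
      have hinj : ∀ x : ψ ⁻¹' {b}, (↑(↑x : ↥s) : L) ∈ u := by
        rintro ⟨x, hxb⟩
        have hb : ψ x = b := hxb
        refine ⟨x.2, ?_⟩
        have := hG2 x
        rw [show G x = b.1 from congrArg Subtype.val hb] at this
        exact this
      have : Function.Injective (fun x : ψ ⁻¹' {b} => (⟨(↑(↑x : ↥s) : L), hinj x⟩ : ↥u)) := by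
        rintro ⟨⟨x, hx⟩, hx'⟩ ⟨⟨y, hy⟩, hy'⟩ hxy
        simp only [Subtype.mk.injEq] at hxy ⊢
        exact hxy
      haveI : Finite (ψ ⁻¹' {b}) := Finite.of_injective _ this
      exact le_of_lt (Cardinal.lt_aleph0_of_finite _) |>.trans le_rfl
    have h1 : Cardinal.mk s ≤ Cardinal.mk {F : Finset L // (↑F : Set L) ⊆ t} * ℵ₀ :=
      Cardinal.mk_le_mk_mul_of_mk_preimage_le ψ hfib
    have h2 : Cardinal.mk {F : Finset L // (↑F : Set L) ⊆ t} ≤ Cardinal.mk (Finset ↥t) := by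
      refine Cardinal.mk_le_of_injective (f := fun F => Finset.subtype (· ∈ t) F.1) ?_
      rintro ⟨F1, hF1⟩ ⟨F2, hF2⟩ h
      have h' : Finset.subtype (· ∈ t) F1 = Finset.subtype (· ∈ t) F2 := h
      refine Subtype.ext ?_
      ext z
      constructor
      · intro hz
        have hzt : z ∈ t := hF1 hz
        have : (⟨z, hzt⟩ : ↥t) ∈ Finset.subtype (· ∈ t) F1 := by
          rw [Finset.mem_subtype]
          exact hz
        rw [h', Finset.mem_subtype] at this
        exact this
      · intro hz
        have hzt : z ∈ t := hF2 hz
        have : (⟨z, hzt⟩ : ↥t) ∈ Finset.subtype (· ∈ t) F2 := by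
          rw [Finset.mem_subtype]
          exact hz
        rw [← h', Finset.mem_subtype] at this
        exact this
    have h3 : Cardinal.mk (Finset ↥t) = Cardinal.mk t := Cardinal.mk_finset_of_infinite _
    calc Cardinal.mk s ≤ Cardinal.mk {F : Finset L // (↑F : Set L) ⊆ t} * ℵ₀ := h1
      _ ≤ Cardinal.mk t * ℵ₀ := by
          refine mul_le_mul' ?_ le_rfl
          rw [← h3]
          exact h2
      _ = Cardinal.mk t := Cardinal.mul_aleph0_eq (Cardinal.aleph0_le_mk _)

theorem indep_image {M : IntermediateField K L} {s : Set ↥M}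
    (hs : AlgebraicIndependent K ((↑) : s → ↥M)) :
    AlgebraicIndependent K ((↑) : ↥(Subtype.val '' s : Set L) → L) := by
  have h1 : AlgebraicIndependent K (M.val ∘ ((↑) : s → ↥M)) := hs.map' Subtype.val_injective
  exact AlgebraicIndependent.image_of_comp s Subtype.val id h1

theorem trdeg_le (A B : Set L)
    (hA : ∀ x ∈ A, IsAlgebraic (IntermediateField.adjoin K B) x) :
    trdeg K (IntermediateField.adjoin K A) ≤ trdeg K (IntermediateField.adjoin K B) := by
  classical
  obtain ⟨u, -, hu⟩ := exists_maximal_algebraicIndependent (R := K) (∅ : Set L) B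
    (empty_subset _) ((algebraicIndependent_empty_iff K L).2 (algebraMap K L).injective)
  have huI : AlgebraicIndependent K ((↑) : u → L) := hu.prop.1
  have huB : u ⊆ B := hu.prop.2
  have hBu : B ⊆ acl K u := by
    intro b hb
    by_cases hbu : b ∈ u
    · exact subset_acl u hbu
    by_contra hbcl
    have hbT : Transcendental (Algebra.adjoin K u) b := fun halg =>
      hbcl ((isAlgebraic_algAdjoin_iff u b).1 halg)
    have hins := insert_indep huI hbT hbu
    have hle := hu.2 ⟨hins, insert_subset hb huB⟩ (subset_insert b u)
    exact hbu (hle (mem_insert b u))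
  have hAu : A ⊆ acl K u := fun a ha => acl_trans hBu (hA a ha)
  have hMAu : ((IntermediateField.adjoin K A : IntermediateField K L) : Set L) ⊆ acl K u :=
    fun m hm => acl_trans hAu (mem_acl_of_mem_adjoin hm)
  have husub : u ⊆ ((IntermediateField.adjoin K B : IntermediateField K L) : Set L) :=
    fun z hz => IntermediateField.subset_adjoin K B (huB hz)
  set g : ↥u → ↥(IntermediateField.adjoin K B) := fun z => ⟨z.1, husub z.2⟩ with hg
  have hginj : Function.Injective g := by
    intro a b hab
    have h1 : (g a).1 = (g b).1 := congrArg Subtype.val hab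
    exact Subtype.ext h1
  have hgind : AlgebraicIndependent K g := by
    refine AlgebraicIndependent.of_comp (IntermediateField.adjoin K B).val ?_
    exact huI
  have hrange : AlgebraicIndependent K
      ((↑) : ↥(Set.range g) → ↥(IntermediateField.adjoin K B)) := hgind.to_subtype_range
  haveI hNE : Nonempty {s : Set ↥(IntermediateField.adjoin K A) //
      AlgebraicIndependent K ((↑) : s → ↥(IntermediateField.adjoin K A))} :=
    ⟨⟨∅, (algebraicIndependent_empty_iff K _).2 (algebraMap K _).injective⟩⟩
  rw [trdeg, trdeg]
  refine ciSup_le' ?_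
  rintro ⟨s, hsI⟩
  have hs' := indep_image hsI
  have hsub' : (Subtype.val '' s : Set L) ⊆ acl K u := by
    rintro _ ⟨z, hz, rfl⟩
    exact hMAu z.2
  have h1 : Cardinal.mk (Subtype.val '' s : Set L) ≤ Cardinal.mk u := mk_le_acl hs' hsub'
  have h2 : Cardinal.mk s = Cardinal.mk (Subtype.val '' s : Set L) :=
    (Cardinal.mk_image_eq Subtype.val_injective).symm
  have h3 : Cardinal.mk u = Cardinal.mk (Set.range g) := (Cardinal.mk_range_eq g hginj).symm
  have h4 := le_ciSup (f := fun σ : {σ : Set ↥(IntermediateField.adjoin K B) //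
      AlgebraicIndependent K ((↑) : σ → ↥(IntermediateField.adjoin K B))} => Cardinal.mk σ.1)
    (Cardinal.bddAbove_range _) ⟨Set.range g, hrange⟩
  calc Cardinal.mk s = Cardinal.mk (Subtype.val '' s : Set L) := h2
    _ ≤ Cardinal.mk u := h1
    _ = Cardinal.mk (Set.range g) := h3
    _ ≤ _ := h4

end TrdegProof



/-- **Lemma 6.1.** If every element of `A` is algebraic over `K(B)` and every element of
`B` is algebraic over `K(A)`, then `K(A)` and `K(B)` have the same transcendence degree
over `K`. -/
theorem trdeg_adjoin_eq_of_algebraic {K L : Type*} [Field K] [Field L] [Algebra K L]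
    (A B : Set L)
    (hA : ∀ x ∈ A, IsAlgebraic (IntermediateField.adjoin K B) x)
    (hB : ∀ x ∈ B, IsAlgebraic (IntermediateField.adjoin K A) x) :
    trdeg K (IntermediateField.adjoin K A) = trdeg K (IntermediateField.adjoin K B) :=
  le_antisymm (TrdegProof.trdeg_le A B hA) (TrdegProof.trdeg_le B A hB)
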